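/- Let n ≥ 3 and consider the n-qubit Hilbert space H = (ℂ²)^{⊗n} (the n-fold tensor product of ℂ² over ℂ). Let |W_n⟩ = (1/√n) ∑_{k=1}^n |e_k⟩, where |e_k⟩ denotes the standard basis vector of H having |1⟩ in the k-th tensor factor and |0⟩ in all other factors, and let |0⋯0⟩ denote the basis vector with |0⟩ in every factor. Suppose ψ ∈ H is a unit vector of the form ψ = (A_1 ⊗ A_2 ⊗ ⋯ ⊗ A_n)|W_n⟩ where each A_k is an invertible 2×2 complex matrix acting on the k-th factor. Then there exist 2×2 unitary matrices U_1,…,U_n and real numbers x ≥ 0 and c_1,…,c_n > 0 with x + ∑_{k=1}^n c_k = 1 such that (U_1 ⊗ U_2 ⊗ ⋯ ⊗ U_n)ψ = √x·|0⋯0⟩ + √(c_1)·|e_n⟩ + ⋯ + √(c_n)·|e_1⟩, i.e., (U_1 ⊗ ⋯ ⊗ U_n)ψ = √x·|0⋯0⟩ + ∑_{k=1}^n √(c_k)·|e_{σ(k)}⟩ for the order-reversing permutation σ; equivalently, ψ is mapped by a local unitary to a state of the form √x|0⋯0⟩ + ∑_k √(c_k)|e_k⟩ with x ≥ 0, c_k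 > 0 and x + ∑_k c_k = 1. -/

import Mathlib

open scoped Matrix

/-- The `n`-qubit Hilbert space is modelled concretely as functions `(Fin n → Fin 2) → ℂ`
(coordinates in the computational basis).  `kronMatrix A` is the matrix of the local
operator `A 0 ⊗ A 1 ⊗ ⋯ ⊗ A (n-1)` in this basis. -/
def kronMatrix (n : ℕ) (A : Fin n → Matrix (Fin 2) (Fin 2) ℂ) :
    Matrix (Fin n → Fin 2) (Fin n → Fin 2) ℂ :=
  fun s t => ∏ k, A k (s k) (t k)

/-- The computational basis vector labelled by `t : Fin n → Fin 2`. -/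
def basisVec (n : ℕ) (t : Fin n → Fin 2) : (Fin n → Fin 2) → ℂ :=
  fun s => if s = t then 1 else 0

/-- `eVec n k` is the basis vector with `|1⟩` in the `k`-th tensor factor and `|0⟩` elsewhere. -/
def eVec (n : ℕ) (k : Fin n) : (Fin n → Fin 2) → ℂ :=
  basisVec n (fun j => if j = k then 1 else 0)

/-- The `n`-qubit W state `|W_n⟩ = (1/√n) ∑_k |e_k⟩`. -/
noncomputable def wState (n : ℕ) : (Fin n → Fin 2) → ℂ :=
  ((1 / Real.sqrt n : ℝ) : ℂ) • ∑ k, eVec n k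

/-! ### Auxiliary lemmas -/

namespace WTypeAux

lemma kron_mul (n : ℕ) (A B : Fin n → Matrix (Fin 2) (Fin 2) ℂ) :
    kronMatrix n (fun k => A k * B k) = kronMatrix n A * kronMatrix n B := by
  funext s t
  simp only [kronMatrix, Matrix.mul_apply, Finset.prod_mul_distrib]
  rw [Finset.prod_univ_sum]
  rw [← Fintype.piFinset_univ]
  apply Finset.sum_congr rfl
  intro u _
  rw [Finset.prod_mul_distrib]

lemma kron_conjT (n : ℕ) (A : Fin n → Matrix (Fin 2) (Fin 2) ℂ) :
    (kronMatrix n A)ᴴ = kronMatrix n (fun k => (A k)ᴴ) := by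
  funext s t
  simp [kronMatrix, Matrix.conjTranspose_apply, map_prod]

lemma kron_one (n : ℕ) : kronMatrix n (fun _ => (1 : Matrix (Fin 2) (Fin 2) ℂ)) = 1 := by
  funext s t
  simp only [kronMatrix, Matrix.one_apply]
  by_cases h : s = t
  · subst h; simp
  · rw [if_neg h]
    obtain ⟨k, hk⟩ : ∃ k, s k ≠ t k := by
      by_contra hc; push_neg at hc; exact h (funext hc)
    exact Finset.prod_eq_zero (Finset.mem_univ k) (by simp [hk])

lemma kron_unitary (n : ℕ) (U : Fin n → Matrix (Fin 2) (Fin 2) ℂ)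
    (hU : ∀ k, U k ∈ Matrix.unitaryGroup (Fin 2) ℂ) :
    kronMatrix n U ∈ Matrix.unitaryGroup (Fin n → Fin 2) ℂ := by
  rw [Matrix.mem_unitaryGroup_iff]
  have h1 : star (kronMatrix n U) = kronMatrix n (fun k => star (U k)) := kron_conjT n U
  rw [h1, ← kron_mul]
  have h2 : (fun k => U k * star (U k)) = fun _ => (1 : Matrix (Fin 2) (Fin 2) ℂ) := by
    funext k; exact (Matrix.mem_unitaryGroup_iff.mp (hU k))
  rw [h2, kron_one]

def deltaF (n : ℕ) (k : Fin n) : Fin n → Fin 2 := fun j => if j = k then 1 else 0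

lemma deltaF_ne_zero (n : ℕ) (k : Fin n) : deltaF n k ≠ (fun _ => 0) := by
  intro h
  have := congrFun h k
  simp [deltaF] at this

lemma deltaF_inj (n : ℕ) {k l : Fin n} (h : deltaF n k = deltaF n l) : k = l := by
  by_contra hkl
  have h2 := congrFun h k
  simp [deltaF, if_neg hkl] at h2

lemma eVec_eq (n : ℕ) (k : Fin n) : eVec n k = basisVec n (deltaF n k) := rfl

lemma eVec_zero (n : ℕ) (k : Fin n) : eVec n k (fun _ => 0) = 0 := by
  rw [eVec_eq]
  simp only [basisVec]
  rw [if_neg]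
  exact fun h => deltaF_ne_zero n k h.symm

lemma eVec_delta (n : ℕ) (k l : Fin n) :
    eVec n l (deltaF n k) = if k = l then 1 else 0 := by
  rw [eVec_eq]
  simp only [basisVec]
  by_cases h : k = l
  · subst h; simp
  · rw [if_neg (fun hc => h (deltaF_inj n hc)), if_neg h]

lemma tri (n : ℕ) (s : Fin n → Fin 2) :
    s = (fun _ => 0) ∨ (∃ k, s = deltaF n k) ∨
      (∃ k k', k ≠ k' ∧ s k = 1 ∧ s k' = 1) := by
  set T := Finset.univ.filter (fun j => s j = 1) with hT
  rcases Nat.lt_or_ge T.card 2 with h2 | h2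
  · interval_cases h : T.card
    · left
      funext j
      have : j ∉ T := Finset.card_eq_zero.mp h ▸ Finset.notMem_empty j
      simp only [hT, Finset.mem_filter, Finset.mem_univ, true_and] at this
      omega
    · obtain ⟨k, hk⟩ := Finset.card_eq_one.mp h
      right; left; exact ⟨k, by
        funext j
        by_cases hj : j = k
        · subst hj
          have : j ∈ T := hk ▸ Finset.mem_singleton_self j
          simp only [hT, Finset.mem_filter] at this
          simp [deltaF, this.2]
        · have : j ∉ T := by rw [hk]; simp [hj]
          simp only [hT, Finset.mem_filter, Finset.mem_univ, true_and] at this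
          simp only [deltaF, if_neg hj]; omega⟩
  · right; right
    obtain ⟨a, ha, b, hb, hab⟩ := Finset.one_lt_card.mp h2
    simp only [hT, Finset.mem_filter, Finset.mem_univ, true_and] at ha hb
    exact ⟨a, b, hab, ha, hb⟩

lemma mulVec_wState (n : ℕ) (M : Matrix (Fin n → Fin 2) (Fin n → Fin 2) ℂ) (s : Fin n → Fin 2) :
    M.mulVec (wState n) s = ((1 / Real.sqrt n : ℝ) : ℂ) * ∑ k, M s (deltaF n k) := by
  simp only [Matrix.mulVec, dotProduct, wState, Pi.smul_apply, Finset.sum_apply,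
    smul_eq_mul, eVec, basisVec, deltaF]
  simp_rw [Finset.mul_sum]
  rw [Finset.sum_comm]
  apply Finset.sum_congr rfl
  intro k _
  calc ∑ x : Fin n → Fin 2, M s x * (((1 / Real.sqrt n : ℝ) : ℂ) *
          if x = (fun j => if j = k then 1 else 0) then 1 else 0)
      = ∑ x : Fin n → Fin 2, (if x = (fun j => if j = k then (1 : Fin 2) else 0) then
          ((1 / Real.sqrt n : ℝ) : ℂ) * M s x else 0) := by
        apply Finset.sum_congr rfl
        intro x _
        by_cases h : x = fun j => if j = k then (1 : Fin 2) else 0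
        · rw [if_pos h, if_pos h]; ring
        · rw [if_neg h, if_neg h]; ring
    _ = ((1 / Real.sqrt n : ℝ) : ℂ) * M s (fun j => if j = k then 1 else 0) := by
        rw [Finset.sum_ite_eq' Finset.univ]; simp

lemma kron_delta (n : ℕ) (B : Fin n → Matrix (Fin 2) (Fin 2) ℂ) (s : Fin n → Fin 2) (k : Fin n) :
    kronMatrix n B s (deltaF n k) = B k (s k) 1 * ∏ j ∈ Finset.univ.erase k, B j (s j) 0 := by
  rw [kronMatrix]
  rw [← Finset.mul_prod_erase Finset.univ _ (Finset.mem_univ k)]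
  simp only [deltaF, if_pos rfl]
  congr 1
  apply Finset.prod_congr rfl
  intro j hj
  rw [if_neg (Finset.ne_of_mem_erase hj)]

lemma core (n : ℕ) (B : Fin n → Matrix (Fin 2) (Fin 2) ℂ) (hB : ∀ k, B k 1 0 = 0) :
    (kronMatrix n B).mulVec (wState n) =
      (((1 / Real.sqrt n : ℝ) : ℂ) * ∑ k, B k 0 1 * ∏ j ∈ Finset.univ.erase k, B j 0 0)
          • basisVec n (fun _ => 0)
        + ∑ k, ((((1 / Real.sqrt n : ℝ) : ℂ)) * (B k 1 1 * ∏ j ∈ Finset.univ.erase k, B j 0 0))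
          • eVec n k := by
  funext s
  rw [Pi.add_apply, mulVec_wState]
  rcases tri n s with hs | ⟨k, hs⟩ | ⟨k, k', hkk, hk, hk'⟩
  · subst hs
    simp only [kron_delta, Pi.smul_apply, Finset.sum_apply, smul_eq_mul, eVec_zero, mul_zero,
      Finset.sum_const_zero, add_zero, basisVec, if_pos rfl, if_true, mul_one]
  · subst hs
    have hL : ∑ l, kronMatrix n B (deltaF n k) (deltaF n l)
        = B k 1 1 * ∏ j ∈ Finset.univ.erase k, B j 0 0 := by
      rw [Finset.sum_eq_single k]
      · rw [kron_delta]
        simp only [deltaF, if_pos rfl]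
        congr 1
        apply Finset.prod_congr rfl
        intro j hj
        rw [if_neg (Finset.ne_of_mem_erase hj)]
      · intro l _ hlk
        rw [kron_delta]
        apply mul_eq_zero_of_right
        apply Finset.prod_eq_zero
          (Finset.mem_erase.mpr ⟨(fun h => hlk (h ▸ rfl) : k ≠ l), Finset.mem_univ k⟩)
        simp only [deltaF, if_pos rfl]
        exact hB k
      · intro h; exact absurd (Finset.mem_univ k) h
    rw [hL]
    have hb0 : basisVec n (fun _ => 0) (deltaF n k) = 0 := by
      simp only [basisVec]
      exact if_neg (deltaF_ne_zero n k)
    simp only [Pi.smul_apply, Finset.sum_apply, smul_eq_mul, hb0, mul_zero, zero_add, eVec_delta]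
    rw [Finset.sum_eq_single k]
    · simp
    · intro l _ hlk
      rw [if_neg (fun h => hlk h.symm), mul_zero]
    · intro h; exact absurd (Finset.mem_univ k) h
  · have hL : ∀ l, kronMatrix n B s (deltaF n l) = 0 := by
      intro l
      rw [kron_delta]
      apply mul_eq_zero_of_right
      have hne : (if l = k then k' else k) ≠ l := by
        by_cases h : l = k
        · simp only [if_pos h]; exact fun hc => hkk (h ▸ hc).symm
        · simp only [if_neg h]; exact fun hc => h hc.symm
      apply Finset.prod_eq_zero (Finset.mem_erase.mpr ⟨hne, Finset.mem_univ _⟩)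
      by_cases h : l = k
      · simp only [if_pos h, hk']; exact hB k'
      · simp only [if_neg h, hk]; exact hB k
    simp only [hL, Finset.sum_const_zero, mul_zero]
    have hs0 : s ≠ (fun _ => 0) := by
      intro h; have := congrFun h k; rw [hk] at this; exact one_ne_zero this
    have hsd : ∀ l, s ≠ deltaF n l := by
      intro l h
      have h1 := congrFun h k
      have h2 := congrFun h k'
      rw [hk] at h1; rw [hk'] at h2
      simp only [deltaF] at h1 h2
      by_cases hc : k = l
      · rw [if_neg (show k' ≠ l from fun h2' => hkk (hc.trans h2'.symm))] at h2
        exact one_ne_zero h2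
      · rw [if_neg hc] at h1
        exact one_ne_zero h1
    have he0 : ∀ l, eVec n l s = 0 := by
      intro l
      rw [eVec_eq]; simp only [basisVec]; exact if_neg (hsd l)
    simp only [Pi.smul_apply, Finset.sum_apply, smul_eq_mul, basisVec, if_neg hs0, he0,
      mul_zero, Finset.sum_const_zero, add_zero]

lemma qr2 (A : Matrix (Fin 2) (Fin 2) ℂ) (hA : IsUnit A) :
    ∃ V ∈ Matrix.unitaryGroup (Fin 2) ℂ,
      (V * A) 1 0 = 0 ∧ (V * A) 0 0 ≠ 0 ∧ (V * A) 1 1 ≠ 0 := by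
  have hdet : A.det ≠ 0 := by
    intro h
    have := (Matrix.isUnit_iff_isUnit_det A).mp hA
    rw [h] at this; simp at this
  set a := A 0 0 with ha
  set b := A 0 1 with hb
  set c := A 1 0 with hc
  set d := A 1 1 with hd
  have hdet2 : A.det = a * d - b * c := Matrix.det_fin_two A
  have hcol : Complex.normSq a + Complex.normSq c ≠ 0 := by
    intro h
    have hna := Complex.normSq_nonneg a
    have hnc := Complex.normSq_nonneg c
    have h1 : a = 0 := Complex.normSq_eq_zero.mp (by linarith)
    have h2 : c = 0 := Complex.normSq_eq_zero.mp (by linarith)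
    apply hdet
    rw [hdet2, h1, h2]; ring
  have hpos : 0 < Complex.normSq a + Complex.normSq c := by
    have hna := Complex.normSq_nonneg a
    have hnc := Complex.normSq_nonneg c
    rcases lt_or_eq_of_le (by linarith : (0:ℝ) ≤ Complex.normSq a + Complex.normSq c) with h | h
    · exact h
    · exact absurd h.symm hcol
  set r : ℝ := Real.sqrt (Complex.normSq a + Complex.normSq c) with hr
  have hrpos : 0 < r := Real.sqrt_pos.mpr hpos
  have hrne : (r : ℂ) ≠ 0 := by
    simp only [ne_eq, Complex.ofReal_eq_zero]; exact ne_of_gt hrpos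
  have hrsq : (r : ℂ) * (r : ℂ) = (Complex.normSq a : ℂ) + (Complex.normSq c : ℂ) := by
    rw [← Complex.ofReal_mul, hr, Real.mul_self_sqrt (le_of_lt hpos)]
    push_cast; ring
  set V : Matrix (Fin 2) (Fin 2) ℂ :=
    (r : ℂ)⁻¹ • !![starRingEnd ℂ a, starRingEnd ℂ c; -c, a] with hV
  have hVu : V ∈ Matrix.unitaryGroup (Fin 2) ℂ := by
    rw [Matrix.mem_unitaryGroup_iff]
    ext i j
    fin_cases i <;> fin_cases j <;>
      simp [hV, Matrix.mul_apply, Fin.sum_univ_two, Matrix.one_apply,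
        Matrix.conjTranspose_apply, mul_comm, Complex.mul_conj] <;>
      field_simp <;>
      rw [sq, hrsq] <;> push_cast <;> ring_nf
  refine ⟨V, hVu, ?_, ?_, ?_⟩
  · simp [hV, Matrix.mul_apply, Fin.sum_univ_two, ← ha, ← hc]
    ring
  · have h : (V * A) 0 0 = (r : ℂ)⁻¹ * ((Complex.normSq a : ℂ) + (Complex.normSq c : ℂ)) := by
      simp [hV, Matrix.mul_apply, Fin.sum_univ_two, ← ha, ← hc, Complex.normSq_eq_conj_mul_self]
      ring
    rw [h]
    apply mul_ne_zero (inv_ne_zero hrne)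
    rw [← hrsq]; exact mul_ne_zero hrne hrne
  · have h : (V * A) 1 1 = (r : ℂ)⁻¹ * A.det := by
      simp [hV, Matrix.mul_apply, Fin.sum_univ_two, hdet2, ← ha, ← hb, ← hc, ← hd]
      ring
    rw [h]
    exact mul_ne_zero (inv_ne_zero hrne) hdet

lemma norm_pres {n : ℕ} (M : Matrix (Fin n → Fin 2) (Fin n → Fin 2) ℂ)
    (hM : M ∈ Matrix.unitaryGroup (Fin n → Fin 2) ℂ) (v : (Fin n → Fin 2) → ℂ) :
    ∑ s, Complex.normSq (M.mulVec v s) = ∑ s, Complex.normSq (v s) := by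
  have hMu : star M * M = 1 := (Unitary.mem_iff.mp hM).1
  have key : dotProduct (star (M.mulVec v)) (M.mulVec v)
      = dotProduct (star v) v := by
    rw [Matrix.star_mulVec, Matrix.dotProduct_mulVec, Matrix.vecMul_vecMul]
    rw [← Matrix.star_eq_conjTranspose, hMu, Matrix.vecMul_one]
  have e : ∀ w : (Fin n → Fin 2) → ℂ,
      dotProduct (star w) w = ((∑ s, Complex.normSq (w s) : ℝ) : ℂ) := by
    intro w
    push_cast
    simp only [dotProduct, Pi.star_apply]
    apply Finset.sum_congr rfl
    intro s _
    rw [mul_comm, RCLike.star_def, Complex.mul_conj]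
  rw [e, e] at key
  exact_mod_cast key

lemma final_norm (n : ℕ) (x : ℝ) (hx : 0 ≤ x) (c : Fin n → ℝ) (hc : ∀ k, 0 ≤ c k) :
    ∑ s, Complex.normSq ((((Real.sqrt x : ℝ) : ℂ) • basisVec n (fun _ => 0)
      + ∑ k, ((Real.sqrt (c k) : ℝ) : ℂ) • eVec n k) s) = x + ∑ k, c k := by
  have point : ∀ s, Complex.normSq ((((Real.sqrt x : ℝ) : ℂ) • basisVec n (fun _ => 0)
      + ∑ k, ((Real.sqrt (c k) : ℝ) : ℂ) • eVec n k) s)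
      = (if s = (fun _ => 0) then x else 0) + ∑ k, (if s = deltaF n k then c k else 0) := by
    intro s
    rcases tri n s with hs | ⟨k, hs⟩ | ⟨k, k', hkk, hk, hk'⟩
    · subst hs
      simp only [Pi.add_apply, Pi.smul_apply, Finset.sum_apply, smul_eq_mul, basisVec,
        if_pos rfl, if_true, mul_one, eVec_zero, mul_zero, Finset.sum_const_zero, add_zero]
      rw [Complex.normSq_ofReal, Real.mul_self_sqrt hx]
      have hz : ∀ k : Fin n, (if (fun _ : Fin n => (0 : Fin 2)) = deltaF n k then c k else 0)
          = 0 := fun k => if_neg (fun h => deltaF_ne_zero n k h.symm)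
      simp only [hz, Finset.sum_const_zero, add_zero]
    · subst hs
      have hb0 : basisVec n (fun _ => 0) (deltaF n k) = 0 := if_neg (deltaF_ne_zero n k)
      simp only [Pi.add_apply, Pi.smul_apply, Finset.sum_apply, smul_eq_mul, hb0, mul_zero,
        zero_add, eVec_delta]
      rw [Finset.sum_eq_single k, Finset.sum_eq_single k]
      · simp only [if_true, mul_one, if_neg (deltaF_ne_zero n k), zero_add]
        rw [Complex.normSq_ofReal, Real.mul_self_sqrt (hc k)]
      · intro l _ hlk
        rw [if_neg (fun h => hlk (deltaF_inj n h).symm)]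
      · intro h; exact absurd (Finset.mem_univ k) h
      · intro l _ hlk
        rw [if_neg (fun h => hlk h.symm), mul_zero]
      · intro h; exact absurd (Finset.mem_univ k) h
    · have hs0 : s ≠ (fun _ => 0) := by
        intro h; have := congrFun h k; rw [hk] at this; exact one_ne_zero this
      have hsd : ∀ l, s ≠ deltaF n l := by
        intro l h
        have h1 := congrFun h k
        have h2 := congrFun h k'
        rw [hk] at h1; rw [hk'] at h2
        simp only [deltaF] at h1 h2
        by_cases hcases : k = l
        · rw [if_neg (show k' ≠ l from fun h2' => hkk (hcases.trans h2'.symm))] at h2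
          exact one_ne_zero h2
        · rw [if_neg hcases] at h1
          exact one_ne_zero h1
      have he0 : ∀ l, eVec n l s = 0 := by
        intro l
        rw [eVec_eq]; exact if_neg (hsd l)
      simp only [Pi.add_apply, Pi.smul_apply, Finset.sum_apply, smul_eq_mul, basisVec,
        if_neg hs0, he0, mul_zero, Finset.sum_const_zero, add_zero, Complex.normSq_zero]
      rw [Finset.sum_congr rfl (fun l _ => if_neg (hsd l))]
      simp
  rw [Finset.sum_congr rfl (fun s _ => point s), Finset.sum_add_distrib]
  congr 1
  · rw [Finset.sum_ite_eq' Finset.univ]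
    simp
  · rw [Finset.sum_comm]
    apply Finset.sum_congr rfl
    intro k _
    rw [Finset.sum_ite_eq' Finset.univ]
    simp

lemma diag_unitary (u v : ℂ) (hu : ‖u‖ = 1) (hv : ‖v‖ = 1) :
    !![u, 0; 0, v] ∈ Matrix.unitaryGroup (Fin 2) ℂ := by
  have hu' : u * starRingEnd ℂ u = 1 := by
    rw [Complex.mul_conj, ← Complex.sq_norm, hu]; norm_num
  have hv' : v * starRingEnd ℂ v = 1 := by
    rw [Complex.mul_conj, ← Complex.sq_norm, hv]; norm_num
  rw [Matrix.mem_unitaryGroup_iff]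
  ext i j
  fin_cases i <;> fin_cases j <;>
    simp [Matrix.mul_apply, Fin.sum_univ_two, Matrix.one_apply, Matrix.conjTranspose_apply,
      hu', hv']

end WTypeAux

open WTypeAux in
theorem w_type_canonical_form (n : ℕ) (hn : 3 ≤ n)
    (A : Fin n → Matrix (Fin 2) (Fin 2) ℂ) (hA : ∀ k, IsUnit (A k))
    (ψ : (Fin n → Fin 2) → ℂ)
    (hψ : ψ = (kronMatrix n A).mulVec (wState n))
    (hunit : ∑ s, Complex.normSq (ψ s) = 1) :
    ∃ U : Fin n → Matrix (Fin 2) (Fin 2) ℂ,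
      (∀ k, U k ∈ Matrix.unitaryGroup (Fin 2) ℂ) ∧
      ∃ x : ℝ, 0 ≤ x ∧ ∃ c : Fin n → ℝ, (∀ k, 0 < c k) ∧ x + ∑ k, c k = 1 ∧
        (kronMatrix n U).mulVec ψ =
          ((Real.sqrt x : ℝ) : ℂ) • basisVec n (fun _ => 0)
            + ∑ k, ((Real.sqrt (c k) : ℝ) : ℂ) • eVec n k := by
  classical
  -- QR decomposition of each A k
  choose V hVu hM10 hM00 hM11 using fun k => qr2 (A k) (hA k)
  set M : Fin n → Matrix (Fin 2) (Fin 2) ℂ := fun k => V k * A k with hM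
  have hnpos : (0 : ℝ) < n := by
    have : 0 < n := by omega
    exact_mod_cast this
  have hwne : ((1 / Real.sqrt n : ℝ) : ℂ) ≠ 0 := by
    simp only [ne_eq, Complex.ofReal_eq_zero]
    exact one_div_ne_zero (ne_of_gt (Real.sqrt_pos.mpr hnpos))
  set y0 : ℂ := ((1 / Real.sqrt n : ℝ) : ℂ)
      * ∑ k, M k 0 1 * ∏ j ∈ Finset.univ.erase k, M j 0 0 with hy0
  set z0 : Fin n → ℂ := fun k => ((1 / Real.sqrt n : ℝ) : ℂ)
      * (M k 1 1 * ∏ j ∈ Finset.univ.erase k, M j 0 0) with hz0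
  have hz0ne : ∀ k, z0 k ≠ 0 := fun k => mul_ne_zero hwne (mul_ne_zero (hM11 k)
    (Finset.prod_ne_zero_iff.mpr fun j _ => hM00 j))
  set i0 : Fin n := ⟨0, by omega⟩ with hi0
  set py : ℂ := if y0 = 0 then 1 else (‖y0‖ : ℂ) / y0 with hpy
  have hpyabs : ‖py‖ = 1 := by
    rw [hpy]; by_cases h : y0 = 0
    · simp [h]
    · rw [if_neg h, norm_div, Complex.norm_real, Real.norm_eq_abs, abs_of_nonneg (norm_nonneg y0),
        div_self (norm_ne_zero_iff.mpr h)]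
  have hpyne : py ≠ 0 := fun h => by rw [h] at hpyabs; simp at hpyabs
  have hpymul : py * y0 = (‖y0‖ : ℂ) := by
    rw [hpy]; by_cases h : y0 = 0
    · simp [h]
    · rw [if_neg h, div_mul_cancel₀ _ h]
  set pz : Fin n → ℂ := fun k => (‖(z0 k)‖ : ℂ) / z0 k with hpz
  have hpzabs : ∀ k, ‖(pz k)‖ = 1 := by
    intro k
    rw [hpz]
    simp only [norm_div, Complex.norm_real, Real.norm_eq_abs]
    rw [abs_of_nonneg (norm_nonneg (z0 k))]
    exact div_self (norm_ne_zero_iff.mpr (hz0ne k))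
  have hpzmul : ∀ k, pz k * z0 k = (‖(z0 k)‖ : ℂ) := fun k =>
    div_mul_cancel₀ _ (hz0ne k)
  set u : Fin n → ℂ := fun j => if j = i0 then py else 1 with hu
  have huabs : ∀ j, ‖(u j)‖ = 1 := by
    intro j; rw [hu]; by_cases h : j = i0 <;> simp [h, hpyabs]
  have huprod : ∏ j, u j = py := by
    rw [hu, Finset.prod_ite_eq' Finset.univ i0 (fun _ => py), if_pos (Finset.mem_univ i0)]
  set v : Fin n → ℂ := fun k => pz k * u k / py with hv
  have hvabs : ∀ k, ‖(v k)‖ = 1 := by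
    intro k
    rw [hv]
    simp only [norm_div, norm_mul, hpzabs, huabs, hpyabs]
    norm_num
  set D : Fin n → Matrix (Fin 2) (Fin 2) ℂ := fun k => !![u k, 0; 0, v k] with hD
  have hDu : ∀ k, D k ∈ Matrix.unitaryGroup (Fin 2) ℂ := fun k =>
    diag_unitary _ _ (huabs k) (hvabs k)
  set U : Fin n → Matrix (Fin 2) (Fin 2) ℂ := fun k => D k * V k with hUdef
  have hUu : ∀ k, U k ∈ Matrix.unitaryGroup (Fin 2) ℂ := fun k => mul_mem (hDu k) (hVu k)
  set B : Fin n → Matrix (Fin 2) (Fin 2) ℂ := fun k => D k * M k with hB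
  have hBA : (fun k => U k * A k) = B := by
    funext k
    rw [hB, hUdef, hM]
    exact Matrix.mul_assoc _ _ _
  have hB10 : ∀ k, B k 1 0 = 0 := by
    intro k
    rw [hB]
    simp only [hD, Matrix.mul_apply, Fin.sum_univ_two]
    simp
    exact Or.inr (hM10 k)
  have hB00 : ∀ k, B k 0 0 = u k * M k 0 0 := by
    intro k; rw [hB]; simp [hD, Matrix.mul_apply, Fin.sum_univ_two]
  have hB01 : ∀ k, B k 0 1 = u k * M k 0 1 := by
    intro k; rw [hB]; simp [hD, Matrix.mul_apply, Fin.sum_univ_two]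
  have hB11 : ∀ k, B k 1 1 = v k * M k 1 1 := by
    intro k; rw [hB]; simp [hD, Matrix.mul_apply, Fin.sum_univ_two]
  -- the two coefficient computations
  have hyB : ((1 / Real.sqrt n : ℝ) : ℂ)
      * ∑ k, B k 0 1 * ∏ j ∈ Finset.univ.erase k, B j 0 0 = (‖y0‖ : ℂ) := by
    calc ((1 / Real.sqrt n : ℝ) : ℂ) * ∑ k, B k 0 1 * ∏ j ∈ Finset.univ.erase k, B j 0 0
        = py * (((1 / Real.sqrt n : ℝ) : ℂ)
            * ∑ k, M k 0 1 * ∏ j ∈ Finset.univ.erase k, M j 0 0) := by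
          rw [Finset.mul_sum, Finset.mul_sum, Finset.mul_sum]
          apply Finset.sum_congr rfl
          intro k _
          rw [hB01 k, Finset.prod_congr rfl (fun j _ => hB00 j), Finset.prod_mul_distrib,
            ← huprod, ← Finset.mul_prod_erase Finset.univ u (Finset.mem_univ k)]
          ring
      _ = (‖y0‖ : ℂ) := by rw [← hy0, hpymul]
  have hzB : ∀ k, ((1 / Real.sqrt n : ℝ) : ℂ)
      * (B k 1 1 * ∏ j ∈ Finset.univ.erase k, B j 0 0) = (‖(z0 k)‖ : ℂ) := by
    intro k
    have hvk : v k * ∏ j ∈ Finset.univ.erase k, u j = pz k := by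
      rw [hv, div_mul_eq_mul_div, mul_assoc,
        Finset.mul_prod_erase Finset.univ u (Finset.mem_univ k), huprod, mul_div_assoc,
        div_self hpyne, mul_one]
    calc ((1 / Real.sqrt n : ℝ) : ℂ) * (B k 1 1 * ∏ j ∈ Finset.univ.erase k, B j 0 0)
        = (v k * ∏ j ∈ Finset.univ.erase k, u j) * (((1 / Real.sqrt n : ℝ) : ℂ)
            * (M k 1 1 * ∏ j ∈ Finset.univ.erase k, M j 0 0)) := by
          rw [hB11 k, Finset.prod_congr rfl (fun j _ => hB00 j), Finset.prod_mul_distrib]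
          ring
      _ = pz k * z0 k := by rw [hvk]
      _ = (‖(z0 k)‖ : ℂ) := hpzmul k
  -- final form
  set x : ℝ := (‖y0‖) ^ 2 with hx
  set c : Fin n → ℝ := fun k => (‖(z0 k)‖) ^ 2 with hc
  have hxnn : 0 ≤ x := by rw [hx]; positivity
  have hcpos : ∀ k, 0 < c k := by
    intro k
    rw [hc]
    exact pow_pos (norm_pos_iff.mpr (hz0ne k)) 2
  have hsx : ((Real.sqrt x : ℝ) : ℂ) = (‖y0‖ : ℂ) := by
    rw [hx, Real.sqrt_sq (norm_nonneg y0)]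
  have hsc : ∀ k, ((Real.sqrt (c k) : ℝ) : ℂ) = (‖(z0 k)‖ : ℂ) := by
    intro k
    rw [hc, Real.sqrt_sq (norm_nonneg (z0 k))]
  have hfinal : (kronMatrix n U).mulVec ψ =
      ((Real.sqrt x : ℝ) : ℂ) • basisVec n (fun _ => 0)
        + ∑ k, ((Real.sqrt (c k) : ℝ) : ℂ) • eVec n k := by
    rw [hψ, Matrix.mulVec_mulVec, ← kron_mul, hBA, core n B hB10, hyB, hsx]
    congr 1
    apply Finset.sum_congr rfl
    intro k _
    rw [hzB k, hsc k]
  refine ⟨U, hUu, x, hxnn, c, hcpos, ?_, hfinal⟩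
  have h1 : ∑ s, Complex.normSq ((kronMatrix n U).mulVec ψ s) = 1 := by
    rw [norm_pres _ (kron_unitary n U hUu) ψ]
    exact hunit
  rw [hfinal] at h1
  rw [← final_norm n x hxnn c (fun k => le_of_lt (hcpos k))]
  exact h1.symm ▸ rfl
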